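/- Let q be a prime power with q > 2, let h(x) := 1 - x^(q-2) over F_q, and let g(x) := h(h(h(x))). Then g induces on F_q the transposition (0 1): the evaluation map of g sends 0 to 1, sends 1 to 0, and fixes every other element of F_q. -/

import Mathlib

lemma carlitz_pow_inv {F : Type*} [Field F] [Fintype F]
    (hF : 2 < Fintype.card F) {x : F} (hx : x ≠ 0) :
    x ^ (Fintype.card F - 2) = x⁻¹ := by
  have h1 : x ^ (Fintype.card F - 1) = 1 := FiniteField.pow_card_sub_one_eq_one x hx
  have : Fintype.card F - 1 = (Fintype.card F - 2) + 1 := by omega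
  rw [this, pow_succ] at h1
  field_simp
  linear_combination h1

/-- For a finite field `F` with `q > 2` elements, let `h(x) = 1 - x^(q-2)` and
`g(x) = h(h(h(x)))`. Then `g` induces the transposition `(0 1)` on `F`:
it sends `0` to `1`, `1` to `0`, and fixes every other element. -/
theorem carlitz_g_transposition (F : Type*) [Field F] [Fintype F]
    (hF : 2 < Fintype.card F) (h g : F → F)
    (hh : ∀ x : F, h x = 1 - x ^ (Fintype.card F - 2))
    (hg : ∀ x : F, g x = h (h (h x))) :
    g 0 = 1 ∧ g 1 = 0 ∧ ∀ x : F, x ≠ 0 → x ≠ 1 → g x = x := by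
  have h0 : h 0 = 1 := by
    rw [hh, zero_pow (by omega), sub_zero]
  have h1 : h 1 = 0 := by rw [hh, one_pow, sub_self]
  refine ⟨by rw [hg, h0, h1, h0], by rw [hg, h1, h0, h1], ?_⟩
  intro x hx0 hx1
  have key : ∀ y : F, y ≠ 0 → h y = 1 - y⁻¹ := fun y hy => by
    rw [hh, carlitz_pow_inv hF hy]
  have hsub : x - 1 ≠ 0 := sub_ne_zero.mpr hx1
  have e1 : h x = (x - 1) / x := by
    rw [key x hx0]; field_simp
  have hne1 : (x - 1) / x ≠ 0 := div_ne_zero hsub hx0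
  have e2 : h ((x - 1) / x) = -(x - 1)⁻¹ := by
    rw [key _ hne1]; field_simp; ring
  have hne2 : -(x - 1)⁻¹ ≠ 0 := by simp [hsub]
  have e3 : h (-(x - 1)⁻¹) = x := by
    rw [key _ hne2]; field_simp; ring
  rw [hg, e1, e2, e3]
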